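/- Let p = (p₁, p₂, …, p_k) and q = (q₁, q₂, …, q_k) be two integer arrays of length k ≥ 2 of positive integers such that p majorizes q and n − 1 = p₁ + p₂ + ⋯ + p_k = q₁ + q₂ + ⋯ + q_k. Then ecc(S(p₁, p₂, …, p_k)) ≥ ecc(S(q₁, q₂, …, q_k)). -/

import Mathlib

open SimpleGraph

/-- The eccentricity of a vertex: the maximum distance from it to any other vertex. -/
noncomputable def eccentricity {V : Type*} [Fintype V] (G : SimpleGraph V) (v : V) : ℕ :=
  Finset.univ.sup fun u => G.dist v u

/-- The average eccentricity of a graph. -/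
noncomputable def avgEcc {V : Type*} [Fintype V] (G : SimpleGraph V) : ℝ :=
  (∑ v : V, (eccentricity G v : ℝ)) / (Fintype.card V : ℝ)

/-- The starlike tree `S(a 0, a 1, …, a (k-1))`: a central vertex (`none`) with `k`
pendant paths attached, the `i`-th of length `a i`. -/
def starlike {k : ℕ} (a : Fin k → ℕ) : SimpleGraph (Option (Σ i : Fin k, Fin (a i))) :=
  SimpleGraph.fromRel (fun x y =>
    (∃ (i : Fin k) (j : Fin (a i)), (j : ℕ) = 0 ∧ x = none ∧ y = some ⟨i, j⟩) ∨
    (∃ (i : Fin k) (j j' : Fin (a i)), (j : ℕ) + 1 = (j' : ℕ) ∧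
      x = some ⟨i, j⟩ ∧ y = some ⟨i, j'⟩))

namespace StarAux

variable {k : ℕ} (a : Fin k → ℕ)

/-- Explicit distance function on the starlike tree. -/
def D : Option (Σ i : Fin k, Fin (a i)) → Option (Σ i : Fin k, Fin (a i)) → ℕ
  | none, none => 0
  | none, some ⟨_, j⟩ => (j : ℕ) + 1
  | some ⟨_, j⟩, none => (j : ℕ) + 1
  | some ⟨i, j⟩, some ⟨i', j'⟩ =>
      if i = i' then ((j : ℕ) - (j' : ℕ)) + ((j' : ℕ) - (j : ℕ))
      else (j : ℕ) + (j' : ℕ) + 2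

lemma D_self (x) : D a x x = 0 := by
  rcases x with _ | ⟨i, j⟩ <;> simp [D]

lemma D_triangle (x y z) : D a x y ≤ D a x z + D a z y := by
  rcases x with _ | ⟨i, j⟩ <;> rcases y with _ | ⟨i', j'⟩ <;> rcases z with _ | ⟨i'', j''⟩ <;>
    simp only [D] <;> (try split_ifs) <;> omega

lemma D_adj {x y} (h : (starlike a).Adj x y) : D a x y ≤ 1 := by
  rw [starlike, fromRel_adj] at h
  obtain ⟨hne, h | h⟩ := h <;>
    rcases h with ⟨i, j, hj, rfl, rfl⟩ | ⟨i, j, j', hj, rfl, rfl⟩ <;>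
      simp [D] <;> omega

lemma D_le_length : ∀ {x y : Option (Σ i : Fin k, Fin (a i))} (w : (starlike a).Walk x y),
    D a x y ≤ w.length := by
  intro x y w
  induction w with
  | nil => simp [D_self]
  | @cons u v w h p ih =>
      calc D a u w ≤ D a u v + D a v w := D_triangle a u w v
      _ ≤ 1 + p.length := add_le_add (D_adj a h) ih
      _ = (SimpleGraph.Walk.cons h p).length := by simp [Nat.add_comm]

lemma adj_center (i : Fin k) (h : 0 < a i) :
    (starlike a).Adj none (some ⟨i, ⟨0, h⟩⟩) := by
  rw [starlike, fromRel_adj]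
  exact ⟨by simp, Or.inl (Or.inl ⟨i, ⟨0, h⟩, rfl, rfl, rfl⟩)⟩

lemma adj_succ (i : Fin k) (m : ℕ) (h : m + 1 < a i) :
    (starlike a).Adj (some ⟨i, ⟨m, by omega⟩⟩) (some ⟨i, ⟨m + 1, h⟩⟩) := by
  rw [starlike, fromRel_adj]
  refine ⟨by simp, Or.inl (Or.inr ⟨i, ⟨m, by omega⟩, ⟨m + 1, h⟩, rfl, rfl, rfl⟩)⟩

lemma reach_center (i : Fin k) : ∀ (m : ℕ) (h : m < a i),
    (starlike a).Reachable none (some ⟨i, ⟨m, h⟩⟩)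
  | 0, h => (adj_center a i h).reachable
  | m + 1, h => (reach_center i m (by omega)).trans (adj_succ a i m h).reachable

lemma reach (v) : (starlike a).Reachable none v := by
  rcases v with _ | ⟨i, ⟨m, h⟩⟩
  · rfl
  · exact reach_center a i m h

lemma starlike_connected : (starlike a).Connected := by
  rw [connected_iff]
  exact ⟨fun u v => (reach a u).symm.trans (reach a v), ⟨none⟩⟩

lemma dist_center_le (i : Fin k) : ∀ (m : ℕ) (h : m < a i),
    (starlike a).dist none (some ⟨i, ⟨m, h⟩⟩) ≤ m + 1
  | 0, h => (dist_eq_one_iff_adj.mpr (adj_center a i h)).le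
  | m + 1, h => by
      calc (starlike a).dist none (some ⟨i, ⟨m + 1, h⟩⟩)
          ≤ (starlike a).dist none (some ⟨i, ⟨m, by omega⟩⟩) +
            (starlike a).dist (some ⟨i, ⟨m, by omega⟩⟩) (some ⟨i, ⟨m + 1, h⟩⟩) :=
            (starlike_connected a).dist_triangle
        _ ≤ (m + 1) + 1 := add_le_add (dist_center_le i m (by omega))
            (dist_eq_one_iff_adj.mpr (adj_succ a i m h)).le

lemma dist_arm_le (i : Fin k) : ∀ (t : ℕ) (j j' : Fin (a i)), (j : ℕ) + t = (j' : ℕ) →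
    (starlike a).dist (some ⟨i, j⟩) (some ⟨i, j'⟩) ≤ t
  | 0, j, j', h => by
      have : j = j' := Fin.ext (by omega)
      subst this; simp
  | t + 1, j, j', h => by
      have hlt : (j : ℕ) + t + 1 < a i := by have := j'.isLt; omega
      have hj' : j' = ⟨(j : ℕ) + t + 1, hlt⟩ := Fin.ext (show (j' : ℕ) = (j : ℕ) + t + 1 by omega)
      subst hj'
      calc (starlike a).dist (some ⟨i, j⟩) (some ⟨i, ⟨(j : ℕ) + t + 1, hlt⟩⟩)
          ≤ (starlike a).dist (some ⟨i, j⟩) (some ⟨i, ⟨(j : ℕ) + t, by omega⟩⟩) +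
            (starlike a).dist (some ⟨i, ⟨(j : ℕ) + t, by omega⟩⟩)
              (some ⟨i, ⟨(j : ℕ) + t + 1, hlt⟩⟩) := (starlike_connected a).dist_triangle
        _ ≤ t + 1 := add_le_add (dist_arm_le i t j ⟨(j : ℕ) + t, by omega⟩ rfl)
            (dist_eq_one_iff_adj.mpr (adj_succ a i ((j : ℕ) + t) hlt)).le

lemma dist_eq_D (x y) : (starlike a).dist x y = D a x y := by
  refine le_antisymm ?_ ?_
  · rcases x with _ | ⟨i, j⟩ <;> rcases y with _ | ⟨i', j'⟩
    · simp [D_self]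
    · have := dist_center_le a i' (j' : ℕ) j'.isLt
      simpa [D, Fin.eta] using this
    · rw [SimpleGraph.dist_comm]
      have := dist_center_le a i (j : ℕ) j.isLt
      simpa [D, Fin.eta] using this
    · by_cases h : i = i'
      · subst h
        simp only [D, if_true, eq_self_iff_true] at *
        rcases le_total (j : ℕ) (j' : ℕ) with hle | hle
        · have := dist_arm_le a i ((j' : ℕ) - (j : ℕ)) j j' (by omega)
          omega
        · have := dist_arm_le a i ((j : ℕ) - (j' : ℕ)) j' j (by omega)
          rw [SimpleGraph.dist_comm]
          omega
      · simp only [D, if_neg h]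
        calc (starlike a).dist (some ⟨i, j⟩) (some ⟨i', j'⟩)
            ≤ (starlike a).dist (some ⟨i, j⟩) none +
              (starlike a).dist none (some ⟨i', j'⟩) := (starlike_connected a).dist_triangle
          _ ≤ ((j : ℕ) + 1) + ((j' : ℕ) + 1) := by
              refine add_le_add ?_ ?_
              · rw [SimpleGraph.dist_comm]
                have := dist_center_le a i (j : ℕ) j.isLt
                simpa [Fin.eta] using this
              · have := dist_center_le a i' (j' : ℕ) j'.isLt
                simpa [Fin.eta] using this
          _ = (j : ℕ) + (j' : ℕ) + 2 := by omega
  · obtain ⟨w, hw⟩ := (starlike_connected a).exists_walk_length_eq_dist x y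
    rw [← hw]
    exact D_le_length a w


/-! ### Eccentricity computations -/

/-- arm-0 eccentricity profile -/
def g (x y : ℕ) : ℕ := ∑ d ∈ Finset.range x, max (x - 1 - d) (d + 1 + y)

def B (b : ℕ → ℕ) (m : ℕ) : ℕ :=
  if m = 0 then g (b 0) (b 1) else ∑ d ∈ Finset.range (b m), (d + 1 + b 0)

def Nsum (k : ℕ) (b : ℕ → ℕ) : ℕ := b 0 + ∑ m ∈ Finset.range k, B b m

lemma eccN (hk : 2 ≤ k) (h1 : ∀ i, 1 ≤ a i) (ha : Antitone a) :
    eccentricity (starlike a) none = a ⟨0, by omega⟩ := by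
  apply le_antisymm
  · apply Finset.sup_le
    intro u _
    rw [dist_eq_D]
    rcases u with _ | ⟨i, j⟩
    · simp [D]
    · simp only [D]
      have h2 := j.isLt
      have h3 : a i ≤ a ⟨0, by omega⟩ := ha (by simp [Fin.le_def])
      omega
  · have hlt : a ⟨0, by omega⟩ - 1 < a ⟨0, by omega⟩ := by have := h1 ⟨0, by omega⟩; omega
    unfold eccentricity
    refine le_trans ?_ (Finset.le_sup (f := fun u => (starlike a).dist none u)
      (Finset.mem_univ (some ⟨⟨0, by omega⟩, ⟨a ⟨0, by omega⟩ - 1, hlt⟩⟩)))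
    simp only [dist_eq_D, D]
    have := h1 ⟨0, by omega⟩
    omega

lemma eccS_pos (hk : 2 ≤ k) (h1 : ∀ i, 1 ≤ a i) (ha : Antitone a)
    (i : Fin k) (j : Fin (a i)) (hi : i ≠ ⟨0, by omega⟩) :
    eccentricity (starlike a) (some ⟨i, j⟩) = (j : ℕ) + 1 + a ⟨0, by omega⟩ := by
  apply le_antisymm
  · apply Finset.sup_le
    intro u _
    rw [dist_eq_D]
    rcases u with _ | ⟨i', j'⟩
    · simp only [D]; omega
    · simp only [D]
      have h2 := j'.isLt
      have h3 : a i' ≤ a ⟨0, by omega⟩ := ha (by simp [Fin.le_def])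
      split_ifs <;> omega
  · have hlt : a ⟨0, by omega⟩ - 1 < a ⟨0, by omega⟩ := by have := h1 ⟨0, by omega⟩; omega
    unfold eccentricity
    refine le_trans ?_ (Finset.le_sup (f := fun u => (starlike a).dist (some ⟨i, j⟩) u)
      (Finset.mem_univ (some ⟨⟨0, by omega⟩, ⟨a ⟨0, by omega⟩ - 1, hlt⟩⟩)))
    simp only [dist_eq_D, D, if_neg hi]
    have := h1 ⟨0, by omega⟩
    omega

lemma eccS_zero (hk : 2 ≤ k) (h1 : ∀ i, 1 ≤ a i) (ha : Antitone a)
    (j : Fin (a ⟨0, by omega⟩)) :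
    eccentricity (starlike a) (some ⟨⟨0, by omega⟩, j⟩) =
      max (a ⟨0, by omega⟩ - 1 - (j : ℕ)) ((j : ℕ) + 1 + a ⟨1, by omega⟩) := by
  have hA := le_max_left (a ⟨0, by omega⟩ - 1 - (j : ℕ)) ((j : ℕ) + 1 + a ⟨1, by omega⟩)
  have hB := le_max_right (a ⟨0, by omega⟩ - 1 - (j : ℕ)) ((j : ℕ) + 1 + a ⟨1, by omega⟩)
  apply le_antisymm
  · apply Finset.sup_le
    intro u _
    rw [dist_eq_D]
    rcases u with _ | ⟨i', j'⟩
    · simp only [D]; omega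
    · simp only [D]
      have h2 := j'.isLt
      split_ifs with hii
      · subst hii
        omega
      · have hv : (1 : ℕ) ≤ (i' : ℕ) := by
          rcases Nat.eq_zero_or_pos (i' : ℕ) with h | h
          · exact absurd (Fin.ext (by simp [h])) hii
          · omega
        have h3 : a i' ≤ a ⟨1, by omega⟩ := ha (by simp [Fin.le_def, hv])
        omega
  · apply max_le
    · have hlt : a ⟨0, by omega⟩ - 1 < a ⟨0, by omega⟩ := by have := h1 ⟨0, by omega⟩; omega
      unfold eccentricity
      refine le_trans ?_ (Finset.le_sup (f := fun u => (starlike a).dist (some ⟨⟨0, by omega⟩, j⟩) u)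
        (Finset.mem_univ (some ⟨⟨0, by omega⟩, ⟨a ⟨0, by omega⟩ - 1, hlt⟩⟩)))
      simp only [dist_eq_D, D, if_true, eq_self_iff_true]
      have h2 := j.isLt
      omega
    · have hlt : a ⟨1, by omega⟩ - 1 < a ⟨1, by omega⟩ := by have := h1 ⟨1, by omega⟩; omega
      have hne : (⟨0, by omega⟩ : Fin k) ≠ ⟨1, by omega⟩ := by
        intro h; exact absurd (congrArg Fin.val h) (by simp)
      unfold eccentricity
      refine le_trans ?_ (Finset.le_sup (f := fun u => (starlike a).dist (some ⟨⟨0, by omega⟩, j⟩) u)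
        (Finset.mem_univ (some ⟨⟨1, by omega⟩, ⟨a ⟨1, by omega⟩ - 1, hlt⟩⟩)))
      simp only [dist_eq_D, D, if_neg hne]
      have := h1 ⟨1, by omega⟩
      omega

lemma sum_eccentricity (hk : 2 ≤ k) (h1 : ∀ i, 1 ≤ a i) (ha : Antitone a) :
    ∑ v : Option (Σ i : Fin k, Fin (a i)), eccentricity (starlike a) v
      = Nsum k (fun m => if h : m < k then a ⟨m, h⟩ else 0) := by
  set b : ℕ → ℕ := fun m => if h : m < k then a ⟨m, h⟩ else 0 with hb
  have hb0 : b 0 = a ⟨0, by omega⟩ := by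
    simp only [hb, dif_pos (show 0 < k by omega)]
  have hb1 : b 1 = a ⟨1, by omega⟩ := by
    simp only [hb, dif_pos (show 1 < k by omega)]
  rw [Fintype.sum_option, Nsum, hb0]
  congr 1
  · exact eccN a hk h1 ha
  have hsplit : ∑ m ∈ Finset.range k, B b m = ∑ i : Fin k, B b (i : ℕ) :=
    (Fin.sum_univ_eq_sum_range (fun m => B b m) k).symm
  rw [hsplit, ← Finset.univ_sigma_univ, Finset.sum_sigma]
  apply Finset.sum_congr rfl
  intro i _
  by_cases hi : i = ⟨0, by omega⟩
  · subst hi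
    calc (∑ j : Fin (a ⟨0, by omega⟩), eccentricity (starlike a) (some ⟨⟨0, by omega⟩, j⟩))
        = ∑ j : Fin (a ⟨0, by omega⟩),
            max (a ⟨0, by omega⟩ - 1 - (j : ℕ)) ((j : ℕ) + 1 + a ⟨1, by omega⟩) :=
          Finset.sum_congr rfl (fun j _ => eccS_zero a hk h1 ha j)
      _ = ∑ d ∈ Finset.range (a ⟨0, by omega⟩),
            max (a ⟨0, by omega⟩ - 1 - d) (d + 1 + a ⟨1, by omega⟩) :=
          Fin.sum_univ_eq_sum_range
            (fun d => max (a ⟨0, by omega⟩ - 1 - d) (d + 1 + a ⟨1, by omega⟩)) _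
      _ = B b ((⟨0, by omega⟩ : Fin k) : ℕ) := by
          show _ = B b 0
          simp only [B, g, hb0, hb1, if_true, eq_self_iff_true]
  · have hvi : (i : ℕ) ≠ 0 := fun h => hi (Fin.ext (by simp [h]))
    have hbi : b (i : ℕ) = a i := by
      simp only [hb, dif_pos i.isLt, Fin.eta]
    calc (∑ j : Fin (a i), eccentricity (starlike a) (some ⟨i, j⟩))
        = ∑ j : Fin (a i), ((j : ℕ) + 1 + a ⟨0, by omega⟩) :=
          Finset.sum_congr rfl (fun j _ => eccS_pos a hk h1 ha i j hi)
      _ = ∑ d ∈ Finset.range (a i), (d + 1 + a ⟨0, by omega⟩) :=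
          Fin.sum_univ_eq_sum_range (fun d => d + 1 + a ⟨0, by omega⟩) _
      _ = B b ((i : Fin k) : ℕ) := by
          simp only [B, if_neg hvi, hbi, hb0]

lemma card_vertices : Fintype.card (Option (Σ i : Fin k, Fin (a i))) = 1 + ∑ i, a i := by
  simp [Fintype.card_option, Fintype.card_sigma, Nat.add_comm]


/-! ### Combinatorial core -/

lemma g_mono (x : ℕ) {y y' : ℕ} (h : y ≤ y') : g x y ≤ g x y' := by
  apply Finset.sum_le_sum
  intro d _
  exact max_le_max le_rfl (by omega)

lemma g_succ (x y : ℕ) : g x y + (x + 1 + y) ≤ g (x + 1) y := by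
  simp only [g]
  rw [Finset.sum_range_succ]
  have h2 : (∑ d ∈ Finset.range x, max (x - 1 - d) (d + 1 + y)) ≤
      ∑ d ∈ Finset.range x, max (x + 1 - 1 - d) (d + 1 + y) :=
    Finset.sum_le_sum (fun d _ => max_le_max (by omega) le_rfl)
  have h3 : max (x + 1 - 1 - x) (x + 1 + y) = x + 1 + y := by
    have : x + 1 - 1 - x = 0 := by omega
    rw [this]
    exact max_eq_right (Nat.zero_le _)
  omega

lemma g_step (x y : ℕ) : g (x + 1) y = g x (y + 1) + max x (y + 1) := by
  simp only [g]
  rw [Finset.sum_range_succ']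
  congr 1
  · apply Finset.sum_congr rfl
    intro e _
    have h1 : x + 1 - 1 - (e + 1) = x - 1 - e := by omega
    have h2 : e + 1 + 1 + y = e + 1 + (y + 1) := by omega
    rw [h1, h2]
  · have h1 : x + 1 - 1 - 0 = x := by omega
    have h2 : 0 + 1 + y = y + 1 := by omega
    rw [h1, h2]

lemma sum_shift (t z : ℕ) :
    ∑ d ∈ Finset.range t, (d + 1 + (z + 1)) = (∑ d ∈ Finset.range t, (d + 1 + z)) + t := by
  have : ∀ d : ℕ, d + 1 + (z + 1) = (d + 1 + z) + 1 := fun d => by omega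
  simp only [this, Finset.sum_add_distrib, Finset.sum_const, Finset.card_range, smul_eq_mul,
    mul_one]

lemma sum_split {M : Type*} [AddCommMonoid M] (k s j : ℕ) (hs : s < k) (hj : j < k)
    (hne : s ≠ j) (f : ℕ → M) :
    ∑ m ∈ Finset.range k, f m
      = f s + f j + ∑ m ∈ ((Finset.range k).erase s).erase j, f m := by
  have hs' : s ∈ Finset.range k := Finset.mem_range.mpr hs
  have hj' : j ∈ (Finset.range k).erase s :=
    Finset.mem_erase.mpr ⟨fun h => hne h.symm, Finset.mem_range.mpr hj⟩
  rw [← Finset.add_sum_erase _ f hs', ← Finset.add_sum_erase _ f hj', add_assoc]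

def transfer (b : ℕ → ℕ) (s j : ℕ) : ℕ → ℕ :=
  fun m => if m = s then b s + 1 else if m = j then b j - 1 else b m

lemma step (k : ℕ) (b : ℕ → ℕ) (s j : ℕ) (hsj : s < j) (hjk : j < k)
    (hba : ∀ m m' : ℕ, m ≤ m' → m' < k → b m' ≤ b m)
    (hbj2 : 2 ≤ b j) : Nsum k b ≤ Nsum k (transfer b s j) := by
  set r := transfer b s j with hr
  have hsk : s < k := by omega
  have hsj' : s ≠ j := by omega
  have hrs : r s = b s + 1 := by simp [hr, transfer]
  have hrj : r j = b j - 1 := by simp [hr, transfer, hsj'.symm]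
  have hro : ∀ m, m ≠ s → m ≠ j → r m = b m := by
    intro m h1 h2; simp [hr, transfer, h1, h2]
  have hjs : b j ≤ b s := hba s j (by omega) hjk
  rw [Nsum, Nsum, sum_split k s j hsk hjk hsj' (B b), sum_split k s j hsk hjk hsj' (B r)]
  set rest := ((Finset.range k).erase s).erase j with hrest
  have hmem : ∀ m ∈ rest, m ≠ s ∧ m ≠ j := by
    intro m hm
    have h2 := Finset.mem_erase.mp hm
    have h3 := Finset.mem_erase.mp h2.2
    exact ⟨h3.1, h2.1⟩
  -- key decomposition of B b j vs B r j (for any s, using value of r 0)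
  by_cases hs0 : s = 0
  · -- s = 0, r 0 = b 0 + 1
    subst hs0
    have hr0 : r 0 = b 0 + 1 := hrs
    by_cases hj1 : j = 1
    · -- case D : s = 0, j = 1
      subst hj1
      have hb11 : b 1 - 1 + 1 = b 1 := by omega
      have hBr0 : B r 0 = g (b 0) (b 1) + b 0 := by
        have : B r 0 = g (b 0 + 1) (b 1 - 1) := by simp [B, hr0, hrj]
        rw [this, g_step, hb11, max_eq_left hjs]
      have hBb0 : B b 0 = g (b 0) (b 1) := by simp [B]
      have hBr1 : B r 1 = (∑ d ∈ Finset.range (b 1 - 1), (d + 1 + b 0)) + (b 1 - 1) := by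
        have : B r 1 = ∑ d ∈ Finset.range (b 1 - 1), (d + 1 + (b 0 + 1)) := by
          simp [B, hrj, hr0]
        rw [this, sum_shift]
      have hBb1 : B b 1 = (∑ d ∈ Finset.range (b 1 - 1), (d + 1 + b 0)) + (b 1 - 1 + 1 + b 0) := by
        have : B b 1 = ∑ d ∈ Finset.range (b 1 - 1 + 1), (d + 1 + b 0) := by
          rw [hb11]; simp [B]
        rw [this, Finset.sum_range_succ]
      have hrest' : ∑ m ∈ rest, B b m ≤ ∑ m ∈ rest, B r m := by
        apply Finset.sum_le_sum
        intro m hm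
        obtain ⟨hm1, hm2⟩ := hmem m hm
        have : B r m = (∑ d ∈ Finset.range (b m), (d + 1 + b 0)) + b m := by
          have h4 : B r m = ∑ d ∈ Finset.range (b m), (d + 1 + (b 0 + 1)) := by
            simp [B, hm1, hm2, hro m hm1 hm2, hr0]
          rw [h4, sum_shift]
        have h5 : B b m = ∑ d ∈ Finset.range (b m), (d + 1 + b 0) := by simp [B, hm1]
        omega
      omega
    · -- case C : s = 0, j ≥ 2
      have hj2 : 2 ≤ j := by omega
      have hj0 : j ≠ 0 := by omega
      have hbj1 : b j - 1 + 1 = b j := by omega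
      have hBr0 : g (b 0) (b 1) + (b 0 + 1 + b 1) ≤ B r 0 := by
        have : B r 0 = g (b 0 + 1) (b 1) := by
          simp [B, hr0, hro 1 (by omega) (by omega)]
        rw [this]
        exact g_succ (b 0) (b 1)
      have hBb0 : B b 0 = g (b 0) (b 1) := by simp [B]
      have hBrj : B r j = (∑ d ∈ Finset.range (b j - 1), (d + 1 + b 0)) + (b j - 1) := by
        have : B r j = ∑ d ∈ Finset.range (b j - 1), (d + 1 + (b 0 + 1)) := by
          simp [B, hj0, hrj, hr0]
        rw [this, sum_shift]
      have hBbj : B b j = (∑ d ∈ Finset.range (b j - 1), (d + 1 + b 0)) + (b j - 1 + 1 + b 0) := by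
        have : B b j = ∑ d ∈ Finset.range (b j - 1 + 1), (d + 1 + b 0) := by
          rw [hbj1]; simp [B, hj0]
        rw [this, Finset.sum_range_succ]
      have hrest' : ∑ m ∈ rest, B b m ≤ ∑ m ∈ rest, B r m := by
        apply Finset.sum_le_sum
        intro m hm
        obtain ⟨hm1, hm2⟩ := hmem m hm
        by_cases hm0 : m = 0
        · omega
        · have h4 : B r m = (∑ d ∈ Finset.range (b m), (d + 1 + b 0)) + b m := by
            have h5 : B r m = ∑ d ∈ Finset.range (b m), (d + 1 + (b 0 + 1)) := by
              simp [B, hm0, hro m hm1 hm2, hr0]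
            rw [h5, sum_shift]
          have h5 : B b m = ∑ d ∈ Finset.range (b m), (d + 1 + b 0) := by simp [B, hm0]
          omega
      omega
  · -- s ≥ 1, r 0 = b 0
    have hr0 : r 0 = b 0 := hro 0 (fun h => hs0 h.symm) (by omega)
    have hbj1 : b j - 1 + 1 = b j := by omega
    have hj0 : j ≠ 0 := by omega
    have hBrj : B r j = ∑ d ∈ Finset.range (b j - 1), (d + 1 + b 0) := by
      simp [B, hj0, hrj, hr0]
    have hBbj : B b j = (∑ d ∈ Finset.range (b j - 1), (d + 1 + b 0)) + (b j - 1 + 1 + b 0) := by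
      have : B b j = ∑ d ∈ Finset.range (b j - 1 + 1), (d + 1 + b 0) := by
        rw [hbj1]; simp [B, hj0]
      rw [this, Finset.sum_range_succ]
    have hBrs : B r s = B b s + (b s + 1 + b 0) := by
      by_cases hs1 : s = 1
      · subst hs1
        have h4 : B r 1 = ∑ d ∈ Finset.range (b 1 + 1), (d + 1 + b 0) := by
          simp [B, hrs, hr0]
        have h5 : B b 1 = ∑ d ∈ Finset.range (b 1), (d + 1 + b 0) := by simp [B]
        rw [h4, Finset.sum_range_succ, h5]
      · have h4 : B r s = ∑ d ∈ Finset.range (b s + 1), (d + 1 + b 0) := by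
          simp [B, hs0, hrs, hr0]
        have h5 : B b s = ∑ d ∈ Finset.range (b s), (d + 1 + b 0) := by simp [B, hs0]
        rw [h4, Finset.sum_range_succ, h5]
    have hrest' : ∑ m ∈ rest, B b m ≤ ∑ m ∈ rest, B r m := by
      apply Finset.sum_le_sum
      intro m hm
      obtain ⟨hm1, hm2⟩ := hmem m hm
      by_cases hm0 : m = 0
      · subst hm0
        have h4 : B r 0 = g (b 0) (r 1) := by simp [B, hr0]
        have h5 : B b 0 = g (b 0) (b 1) := by simp [B]
        rw [h4, h5]
        by_cases hs1 : s = 1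
        · subst hs1
          rw [hrs]
          exact g_mono _ (by omega)
        · rw [hro 1 (fun h => hs1 h.symm) (by omega)]
      · have h4 : B r m = B b m := by simp [B, hm0, hro m hm1 hm2, hr0]
        omega
    omega


lemma Nsum_congr (k : ℕ) (hk : 2 ≤ k) (p q : ℕ → ℕ) (h : ∀ m, m < k → p m = q m) :
    Nsum k p = Nsum k q := by
  have h0 : p 0 = q 0 := h 0 (by omega)
  have h1 : p 1 = q 1 := h 1 (by omega)
  rw [Nsum, Nsum, h0]
  congr 1
  apply Finset.sum_congr rfl
  intro m hm
  have hmk : m < k := Finset.mem_range.mp hm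
  by_cases hm0 : m = 0
  · subst hm0; simp [B, h0, h1]
  · simp [B, hm0, h m hmk, h0]

lemma Nsum_le (k : ℕ) (hk : 2 ≤ k) : ∀ (μ : ℕ) (p q : ℕ → ℕ),
    (∀ m, m < k → 1 ≤ p m) → (∀ m, m < k → 1 ≤ q m) →
    (∀ m m', m ≤ m' → m' < k → p m' ≤ p m) → (∀ m m', m ≤ m' → m' < k → q m' ≤ q m) →
    (∀ m, m < k → ∑ i ∈ Finset.range (m + 1), q i ≤ ∑ i ∈ Finset.range (m + 1), p i) →
    (∑ i ∈ Finset.range k, q i = ∑ i ∈ Finset.range k, p i) →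
    (∑ m ∈ Finset.range k,
      (∑ i ∈ Finset.range (m + 1), p i - ∑ i ∈ Finset.range (m + 1), q i) ≤ μ) →
    Nsum k q ≤ Nsum k p := by
  intro μ
  induction μ with
  | zero =>
    intro p q hp1 hq1 hpa hqa hmaj htot hmeas
    have hpre : ∀ m, m < k → ∑ i ∈ Finset.range (m + 1), p i = ∑ i ∈ Finset.range (m + 1), q i := by
      intro m hm
      have h2 := Finset.sum_eq_zero_iff.mp (Nat.le_zero.mp hmeas) m (Finset.mem_range.mpr hm)
      have h3 := hmaj m hm
      omega
    have hpq : ∀ m, m < k → p m = q m := by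
      intro m hm
      rcases m with _ | m
      · have := hpre 0 hm
        simpa [Finset.sum_range_one] using this
      · have e1 := hpre (m + 1) hm
        have e2 := hpre m (by omega)
        rw [Finset.sum_range_succ, Finset.sum_range_succ (f := q)] at e1
        omega
    exact (Nsum_congr k hk q p (fun m hm => (hpq m hm).symm)).le
  | succ μ ih =>
    intro p q hp1 hq1 hpa hqa hmaj htot hmeas
    by_cases hpq : ∀ m, m < k → p m = q m
    · exact (Nsum_congr k hk q p (fun m hm => (hpq m hm).symm)).le
    push_neg at hpq
    obtain ⟨m0, hm0k, hm0⟩ := hpq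
    have hex : ∃ s, s < k ∧ p s ≠ q s := ⟨m0, hm0k, hm0⟩
    set s := Nat.find hex with hsdef
    obtain ⟨hsk, hsne⟩ : s < k ∧ p s ≠ q s := Nat.find_spec hex
    have heq_lt : ∀ m, m < s → p m = q m := by
      intro m hm
      have h2 : ¬(m < k ∧ p m ≠ q m) := Nat.find_min hex hm
      by_contra h3
      exact h2 ⟨by omega, h3⟩
    have hprefix_eq : ∀ t, t ≤ s → ∑ i ∈ Finset.range t, p i = ∑ i ∈ Finset.range t, q i := by
      intro t ht
      exact Finset.sum_congr rfl (fun i hi => heq_lt i (by have := Finset.mem_range.mp hi; omega))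
    have hps : q s < p s := by
      have h2 := hmaj s hsk
      rw [Finset.sum_range_succ, Finset.sum_range_succ (f := p), hprefix_eq s le_rfl] at h2
      omega
    have hsk1 : s < k - 1 := by
      by_contra h2
      have hsk2 : s = k - 1 := by omega
      have e := htot
      rw [show k = s + 1 by omega, Finset.sum_range_succ, Finset.sum_range_succ (f := p),
        hprefix_eq s le_rfl] at e
      omega
    have hexj : ∃ j, (s < j ∧ j < k) ∧ (j = k - 1 ∨ q (j + 1) < q j) :=
      ⟨k - 1, ⟨by omega, by omega⟩, Or.inl rfl⟩
    set j := Nat.find hexj with hjdef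
    obtain ⟨⟨hsj, hjk⟩, hjor⟩ : (s < j ∧ j < k) ∧ (j = k - 1 ∨ q (j + 1) < q j) :=
      Nat.find_spec hexj
    have hrun' : ∀ m, s + 1 ≤ m → m ≤ j → q m = q (s + 1) := by
      intro m hm
      induction m, hm using Nat.le_induction with
      | base => intro _; rfl
      | succ m hm ihm =>
        intro h2
        have h3 : ¬((s < m ∧ m < k) ∧ (m = k - 1 ∨ q (m + 1) < q m)) :=
          Nat.find_min hexj (by omega)
        have h4 : q (m + 1) ≤ q m := hqa m (m + 1) (by omega) (by omega)
        have h5 : ¬(m = k - 1 ∨ q (m + 1) < q m) := by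
          intro h6
          exact h3 ⟨⟨by omega, by omega⟩, h6⟩
        push_neg at h5
        have h6 : q (m + 1) = q m := by omega
        rw [h6]
        exact ihm (by omega)
    have hrun : ∀ m, s < m → m ≤ j → q m = q j := by
      intro m h1 h2
      rw [hrun' m (by omega) h2, ← hrun' j (by omega) le_rfl]
    have hIco_q : ∀ t, s + 1 ≤ t → t ≤ k →
        ∑ i ∈ Finset.range t, q i
          = ∑ i ∈ Finset.range (s + 1), q i + ∑ i ∈ Finset.Ico (s + 1) t, q i := by
      intro t h1 h2
      rw [Finset.range_eq_Ico, Finset.range_eq_Ico]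
      exact (Finset.sum_Ico_consecutive _ (Nat.zero_le (s + 1)) h1).symm
    have hIco_p : ∀ t, s + 1 ≤ t → t ≤ k →
        ∑ i ∈ Finset.range t, p i
          = ∑ i ∈ Finset.range (s + 1), p i + ∑ i ∈ Finset.Ico (s + 1) t, p i := by
      intro t h1 h2
      rw [Finset.range_eq_Ico, Finset.range_eq_Ico]
      exact (Finset.sum_Ico_consecutive _ (Nat.zero_le (s + 1)) h1).symm
    have hpres : ∑ i ∈ Finset.range (s + 1), q i < ∑ i ∈ Finset.range (s + 1), p i := by
      rw [Finset.sum_range_succ, Finset.sum_range_succ (f := p), hprefix_eq s le_rfl]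
      omega
    have hqj2 : 2 ≤ q j := by
      by_contra h2
      have hqj1 : q j = 1 := by have := hq1 j hjk; omega
      have hjk1 : j = k - 1 := by
        rcases hjor with h3 | h3
        · exact h3
        · by_contra h4
          have := hq1 (j + 1) (by omega)
          omega
      have hqone : ∀ i ∈ Finset.Ico (s + 1) k, q i = 1 := by
        intro i hi
        have hi' := Finset.mem_Ico.mp hi
        rw [hrun i (by omega) (by omega), hqj1]
      have hq_Ico : ∑ i ∈ Finset.Ico (s + 1) k, q i = k - (s + 1) := by
        rw [Finset.sum_congr rfl hqone]
        simp [Nat.card_Ico]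
      have hp_Ico : k - (s + 1) ≤ ∑ i ∈ Finset.Ico (s + 1) k, p i := by
        have h3 : (Finset.Ico (s + 1) k).card • 1 ≤ ∑ i ∈ Finset.Ico (s + 1) k, p i :=
          Finset.card_nsmul_le_sum _ _ _
            (fun i hi => hp1 i (Finset.mem_Ico.mp hi).2)
        simpa [Nat.card_Ico] using h3
      have e1 := hIco_q k (by omega) le_rfl
      have e2 := hIco_p k (by omega) le_rfl
      omega
    have hstrict : ∀ m, s ≤ m → m < j →
        ∑ i ∈ Finset.range (m + 1), q i + 1 ≤ ∑ i ∈ Finset.range (m + 1), p i := by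
      intro m h1 h2
      rcases Nat.eq_or_lt_of_le h1 with rfl | h3
      · omega
      by_contra h4
      have heqm : ∑ i ∈ Finset.range (m + 1), p i = ∑ i ∈ Finset.range (m + 1), q i := by
        have := hmaj m (by omega)
        omega
      have hnext : q (m + 1) ≤ p (m + 1) := by
        have h5 := hmaj (m + 1) (by omega)
        rw [Finset.sum_range_succ, Finset.sum_range_succ (f := p), heqm] at h5
        omega
      have hlex : ∃ l, l ∈ Finset.Ico (s + 1) (m + 1) ∧ p l < q l := by
        by_contra h5
        push_neg at h5
        have h6 : ∑ i ∈ Finset.Ico (s + 1) (m + 1), q i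
            ≤ ∑ i ∈ Finset.Ico (s + 1) (m + 1), p i :=
          Finset.sum_le_sum (fun i hi => h5 i hi)
        have e1 := hIco_q (m + 1) (by omega) (by omega)
        have e2 := hIco_p (m + 1) (by omega) (by omega)
        omega
      obtain ⟨l, hl, hlpq⟩ := hlex
      have hl' := Finset.mem_Ico.mp hl
      have h7 : p (m + 1) ≤ p l := hpa l (m + 1) (by omega) (by omega)
      have h8 : q l = q (m + 1) := by
        rw [hrun l (by omega) (by omega), hrun (m + 1) (by omega) (by omega)]
      omega
    -- the transferred array
    set r := transfer q s j with hrdef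
    have hrs : r s = q s + 1 := by simp [hrdef, transfer]
    have hrj : r j = q j - 1 := by
      have hjs'' : j ≠ s := by omega
      simp [hrdef, transfer, hjs'']
    have hro : ∀ m, m ≠ s → m ≠ j → r m = q m := by
      intro m h1 h2; simp [hrdef, transfer, h1, h2]
    have hr1 : ∀ m, m < k → 1 ≤ r m := by
      intro m hm
      by_cases h1 : m = s
      · subst h1; omega
      by_cases h2 : m = j
      · subst h2; omega
      · rw [hro m h1 h2]; exact hq1 m hm
    have hra : ∀ m m', m ≤ m' → m' < k → r m' ≤ r m := by
      intro m m' h1 h2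
      have hqmm : q m' ≤ q m := hqa m m' h1 h2
      by_cases hms : m = s
      · subst hms
        by_cases h3 : m' = s
        · subst h3; omega
        by_cases h4 : m' = j
        · subst h4; omega
        · rw [hro m' h3 h4]; omega
      by_cases hmj : m = j
      · subst hmj
        by_cases h3 : m' = j
        · subst h3; omega
        · have h4 : m' ≠ s := by omega
          rw [hro m' h4 h3]
          rcases hjor with h5 | h5
          · omega
          · have h6 : q m' ≤ q (j + 1) := hqa (j + 1) m' (by omega) h2
            omega
      -- m ∉ {s, j}
      rw [hro m hms hmj]
      by_cases h3 : m' = s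
      · subst h3
        -- m < s, need q s + 1 ≤ q m
        have h4 : m < s := by omega
        have h5 : p m = q m := heq_lt m h4
        have h6 : p s ≤ p m := hpa m s (by omega) hsk
        omega
      by_cases h4 : m' = j
      · subst h4; omega
      · rw [hro m' h3 h4]; omega
    -- prefix sums of r
    have hpre1 : ∀ t, t ≤ s → ∑ i ∈ Finset.range t, r i = ∑ i ∈ Finset.range t, q i := by
      intro t ht
      apply Finset.sum_congr rfl
      intro i hi
      have := Finset.mem_range.mp hi
      exact hro i (by omega) (by omega)
    have hpre2 : ∀ t, s < t → t ≤ j →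
        ∑ i ∈ Finset.range t, r i = ∑ i ∈ Finset.range t, q i + 1 := by
      intro t h1 h2
      have hsmem : s ∈ Finset.range t := Finset.mem_range.mpr h1
      rw [← Finset.add_sum_erase _ r hsmem, ← Finset.add_sum_erase _ q hsmem, hrs]
      have : ∑ i ∈ (Finset.range t).erase s, r i = ∑ i ∈ (Finset.range t).erase s, q i := by
        apply Finset.sum_congr rfl
        intro i hi
        have h3 := Finset.mem_erase.mp hi
        have h4 := Finset.mem_range.mp h3.2
        exact hro i h3.1 (by omega)
      omega
    have hpre3 : ∀ t, j < t → t ≤ k →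
        ∑ i ∈ Finset.range t, r i = ∑ i ∈ Finset.range t, q i := by
      intro t h1 h2
      rw [sum_split t s j (by omega) (by omega) (by omega) r,
        sum_split t s j (by omega) (by omega) (by omega) q, hrs, hrj]
      have : ∑ m ∈ ((Finset.range t).erase s).erase j, r m
          = ∑ m ∈ ((Finset.range t).erase s).erase j, q m := by
        apply Finset.sum_congr rfl
        intro i hi
        have h3 := Finset.mem_erase.mp hi
        have h4 := Finset.mem_erase.mp h3.2
        exact hro i h4.1 h3.1
      omega
    have hmajr : ∀ m, m < k →
        ∑ i ∈ Finset.range (m + 1), r i ≤ ∑ i ∈ Finset.range (m + 1), p i := by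
      intro m hm
      rcases le_or_gt (m + 1) s with h1 | h1
      · rw [hpre1 (m + 1) h1]; exact hmaj m hm
      rcases le_or_gt (m + 1) j with h2 | h2
      · rw [hpre2 (m + 1) h1 h2]
        exact hstrict m (by omega) (by omega)
      · rw [hpre3 (m + 1) h2 (by omega)]; exact hmaj m hm
    have htotr : ∑ i ∈ Finset.range k, r i = ∑ i ∈ Finset.range k, p i := by
      rw [hpre3 k (by omega) le_rfl]; exact htot
    have hprer_ge : ∀ m, m < k →
        ∑ i ∈ Finset.range (m + 1), q i ≤ ∑ i ∈ Finset.range (m + 1), r i := by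
      intro m hm
      rcases le_or_gt (m + 1) s with h1 | h1
      · rw [hpre1 (m + 1) h1]
      rcases le_or_gt (m + 1) j with h2 | h2
      · rw [hpre2 (m + 1) h1 h2]; omega
      · rw [hpre3 (m + 1) h2 (by omega)]
    have hmeasr : ∑ m ∈ Finset.range k,
        (∑ i ∈ Finset.range (m + 1), p i - ∑ i ∈ Finset.range (m + 1), r i) ≤ μ := by
      have hlt : ∑ m ∈ Finset.range k,
          (∑ i ∈ Finset.range (m + 1), p i - ∑ i ∈ Finset.range (m + 1), r i)
          < ∑ m ∈ Finset.range k,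
          (∑ i ∈ Finset.range (m + 1), p i - ∑ i ∈ Finset.range (m + 1), q i) := by
        apply Finset.sum_lt_sum
        · intro m hm
          have h1 := hprer_ge m (Finset.mem_range.mp hm)
          omega
        · refine ⟨s, Finset.mem_range.mpr hsk, ?_⟩
          have h1 := hpre2 (s + 1) (by omega) (by omega)
          have h2 := hstrict s le_rfl hsj
          omega
      omega
    calc Nsum k q ≤ Nsum k r := step k q s j hsj hjk hqa hqj2
      _ ≤ Nsum k p := ih p r hp1 hr1 hpa hra hmajr htotr hmeasr

end StarAux

open StarAux in
/-- If the nonincreasing array `p` of positive integers majorizes the nonincreasing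
array `q`, both of length `k ≥ 2` and with common sum `n - 1`, then
`ecc (S(p₁,…,p_k)) ≥ ecc (S(q₁,…,q_k))`. -/
theorem avgEcc_starlike_of_majorize {k n : ℕ} (hk : 2 ≤ k) (p q : Fin k → ℕ)
    (hp1 : ∀ i, 1 ≤ p i) (hq1 : ∀ i, 1 ≤ q i)
    (hpa : Antitone p) (hqa : Antitone q)
    (hmaj : ∀ m : Fin k, ∑ i ∈ Finset.Iic m, q i ≤ ∑ i ∈ Finset.Iic m, p i)
    (hsump : ∑ i, p i = n - 1) (hsumq : ∑ i, q i = n - 1) :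
    avgEcc (starlike q) ≤ avgEcc (starlike p) := by
  classical
  -- the ℕ-indexed versions of the arrays
  set p' : ℕ → ℕ := fun m => if h : m < k then p ⟨m, h⟩ else 0 with hp'
  set q' : ℕ → ℕ := fun m => if h : m < k then q ⟨m, h⟩ else 0 with hq'
  have hp'v : ∀ (m : ℕ) (h : m < k), p' m = p ⟨m, h⟩ := fun m h => dif_pos h
  have hq'v : ∀ (m : ℕ) (h : m < k), q' m = q ⟨m, h⟩ := fun m h => dif_pos h
  -- conversion of partial sums
  have hconv : ∀ (f : Fin k → ℕ) (f' : ℕ → ℕ), (∀ (m : ℕ) (h : m < k), f' m = f ⟨m, h⟩) →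
      ∀ (m : ℕ) (hm : m < k),
        ∑ i ∈ Finset.Iic (⟨m, hm⟩ : Fin k), f i = ∑ i ∈ Finset.range (m + 1), f' i := by
    intro f f' hf m hm
    refine Finset.sum_bij'
      (i := fun (i : Fin k) (_ : i ∈ Finset.Iic (⟨m, hm⟩ : Fin k)) => (i : ℕ))
      (j := fun (l : ℕ) (hl : l ∈ Finset.range (m + 1)) =>
        (⟨l, by have := Finset.mem_range.mp hl; omega⟩ : Fin k)) ?_ ?_ ?_ ?_ ?_
    · intro i hi
      have h2 := Finset.mem_Iic.mp hi
      rw [Fin.le_def] at h2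
      simp only [Fin.val_mk] at h2
      simpa [Finset.mem_range] using (by omega : (i : ℕ) < m + 1)
    · intro l hl
      have hl' := Finset.mem_range.mp hl
      exact Finset.mem_Iic.mpr (by rw [Fin.le_def]; simp only [Fin.val_mk]; omega)
    · intro i hi
      exact Fin.eta i i.isLt
    · intro l hl
      rfl
    · intro i hi
      rw [hf (i : ℕ) i.isLt, Fin.eta]
  -- conversion of total sums
  have htotconv : ∀ (f : Fin k → ℕ) (f' : ℕ → ℕ), (∀ (m : ℕ) (h : m < k), f' m = f ⟨m, h⟩) →
      ∑ i, f i = ∑ i ∈ Finset.range k, f' i := by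
    intro f f' hf
    rw [← Fin.sum_univ_eq_sum_range f' k]
    exact Finset.sum_congr rfl (fun i _ => by rw [hf (i : ℕ) i.isLt, Fin.eta])
  have hktot : k ≤ ∑ i, p i := by
    have h2 : (Finset.univ : Finset (Fin k)).card • 1 ≤ ∑ i, p i :=
      Finset.card_nsmul_le_sum _ _ _ (fun i _ => hp1 i)
    simpa using h2
  have hn3 : 3 ≤ n := by omega
  -- cardinalities
  have hcardp : (Fintype.card (Option (Σ i : Fin k, Fin (p i))) : ℝ) = (n : ℝ) := by
    rw [card_vertices, hsump]
    norm_cast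
    omega
  have hcardq : (Fintype.card (Option (Σ i : Fin k, Fin (q i))) : ℝ) = (n : ℝ) := by
    rw [card_vertices, hsumq]
    norm_cast
    omega
  -- average eccentricity in terms of Nsum
  have havgp : avgEcc (starlike p) = (Nsum k p' : ℝ) / (n : ℝ) := by
    rw [avgEcc, hcardp]
    congr 1
    rw [← Nat.cast_sum, sum_eccentricity p hk hp1 hpa]
  have havgq : avgEcc (starlike q) = (Nsum k q' : ℝ) / (n : ℝ) := by
    rw [avgEcc, hcardq]
    congr 1
    rw [← Nat.cast_sum, sum_eccentricity q hk hq1 hqa]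
  rw [havgp, havgq, div_le_div_iff_of_pos_right (by positivity : (0 : ℝ) < (n : ℝ))]
  have hkey : Nsum k q' ≤ Nsum k p' := by
    apply Nsum_le k hk
      (∑ m ∈ Finset.range k,
        (∑ i ∈ Finset.range (m + 1), p' i - ∑ i ∈ Finset.range (m + 1), q' i)) p' q'
    · intro m hm
      rw [hp'v m hm]
      exact hp1 _
    · intro m hm
      rw [hq'v m hm]
      exact hq1 _
    · intro m m' h1 h2
      rw [hp'v m (by omega), hp'v m' h2]
      exact hpa (by rw [Fin.le_def]; exact h1)
    · intro m m' h1 h2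
      rw [hq'v m (by omega), hq'v m' h2]
      exact hqa (by rw [Fin.le_def]; exact h1)
    · intro m hm
      rw [← hconv p p' hp'v m hm, ← hconv q q' hq'v m hm]
      exact hmaj ⟨m, hm⟩
    · rw [← htotconv p p' hp'v, ← htotconv q q' hq'v, hsump, hsumq]
    · exact le_rfl
  exact_mod_cast hkey
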